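/- If the second smallest Laplacian eigenvalue of a finite undirected graph satisfies λ₂(L) > r − 1 for a positive integer r, then the graph is at least ⌊r/2⌋-robust. -/

import Mathlib

/-- A set `S` is `r`-reachable in `G` if some vertex in `S` has at least `r` neighbors outside `S`. -/
def rReachable {V : Type*} (G : SimpleGraph V) (r : ℕ) (S : Set V) : Prop :=
  ∃ i ∈ S, r ≤ ({j | G.Adj i j} \ S).ncard

/-- A graph is `r`-robust if for every pair of nonempty disjoint vertex subsets,
at least one of them is `r`-reachable. -/
def rRobust {V : Type*} (G : SimpleGraph V) (r : ℕ) : Prop :=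
  ∀ X₁ X₂ : Set V, X₁.Nonempty → X₂.Nonempty → Disjoint X₁ X₂ →
    rReachable G r X₁ ∨ rReachable G r X₂

/-- The second smallest eigenvalue (with multiplicity) of the Laplacian matrix of `G`:
the algebraic connectivity. -/
noncomputable def lambda2 {V : Type*} [Fintype V] [DecidableEq V] (G : SimpleGraph V)
    [DecidableRel G.Adj] : ℝ :=
  if h : 1 < Fintype.card V then
    let f : Fin (Fintype.card V) → ℝ := fun i =>
      (SimpleGraph.posSemidef_lapMatrix ℝ G).1.eigenvalues ((Fintype.equivFin V).symm i)
    (f ∘ Tuple.sort f) ⟨1, h⟩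
  else 0

section AuxRobust

open Finset Matrix BigOperators

variable {V : Type*} [Fintype V] [DecidableEq V] (G : SimpleGraph V) [DecidableRel G.Adj]

lemma rayleigh_aux (h2 : 1 < Fintype.card V) (v : V → ℝ) (hv : ∑ i, v i = 0) :
    lambda2 G * (∑ i, v i * v i) ≤ v ⬝ᵥ (G.lapMatrix ℝ *ᵥ v) := by
  classical
  set M := G.lapMatrix ℝ with hM
  have hPSD := SimpleGraph.posSemidef_lapMatrix ℝ G
  set B := hPSD.1.eigenvectorBasis with hB
  set μ := hPSD.1.eigenvalues with hμ
  -- eigen-dot identity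
  have hdot : ∀ (x : V → ℝ) (j : V), (⇑(B j)) ⬝ᵥ (M *ᵥ x) = μ j * ((⇑(B j)) ⬝ᵥ x) := by
    intro x j
    have hsym : Mᵀ = M := SimpleGraph.isSymm_lapMatrix (R := ℝ) G
    calc (⇑(B j)) ⬝ᵥ (M *ᵥ x) = ((⇑(B j)) ᵥ* M) ⬝ᵥ x := (Matrix.dotProduct_mulVec _ _ _)
      _ = (M *ᵥ (⇑(B j))) ⬝ᵥ x := by rw [← Matrix.mulVec_transpose, hsym]
      _ = (μ j • (⇑(B j))) ⬝ᵥ x := by rw [hPSD.1.mulVec_eigenvectorBasis]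
      _ = μ j * ((⇑(B j)) ⬝ᵥ x) := by rw [smul_dotProduct]; rfl
  -- Parseval in dot-product form
  have par : ∀ x y : V → ℝ, ∑ j, ((⇑(B j)) ⬝ᵥ x) * ((⇑(B j)) ⬝ᵥ y) = x ⬝ᵥ y := by
    intro x y
    have h1 := B.repr.inner_map_map (WithLp.toLp 2 x) (WithLp.toLp 2 y)
    have hrx : ∀ j, B.repr (WithLp.toLp 2 x) j = (⇑(B j)) ⬝ᵥ x := by
      intro j
      rw [B.repr_apply_apply]
      simp [PiLp.inner_apply, RCLike.inner_apply, dotProduct, mul_comm]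
    have hry : ∀ j, B.repr (WithLp.toLp 2 y) j = (⇑(B j)) ⬝ᵥ y := by
      intro j
      rw [B.repr_apply_apply]
      simp [PiLp.inner_apply, RCLike.inner_apply, dotProduct, mul_comm]
    simp only [PiLp.inner_apply, RCLike.inner_apply, conj_trivial] at h1
    simp only [hrx, hry] at h1
    rw [dotProduct]; simpa only [mul_comm] using h1
  -- nonnegativity of eigenvalues
  have hnn : ∀ j, 0 ≤ μ j := fun j => hPSD.eigenvalues_nonneg j
  -- setup sorting
  set e := Fintype.equivFin V with he
  set g : Fin (Fintype.card V) → ℝ := fun i => μ (e.symm i) with hg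
  set σ := Tuple.sort g with hσ
  have hlam : lambda2 G = g (σ ⟨1, h2⟩) := by
    rw [lambda2, dif_pos h2]; rfl
  set lam := g (σ ⟨1, h2⟩) with hlamdef
  rw [hlam]
  set c : V → ℝ := fun j => (⇑(B j)) ⬝ᵥ v with hc
  have hsum : ∑ j, c j * c j = ∑ i, v i * v i := by
    have := par v v; simpa [hc, dotProduct] using this
  have hLv : v ⬝ᵥ (M *ᵥ v) = ∑ j, μ j * (c j * c j) := by
    have h1 := par (M *ᵥ v) v
    have h2' : ∀ j : V, ((⇑(B j)) ⬝ᵥ (M *ᵥ v)) = μ j * c j := fun j => hdot v j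
    have h3 : (M *ᵥ v) ⬝ᵥ v = v ⬝ᵥ (M *ᵥ v) := dotProduct_comm _ _
    rw [← h3, ← h1]
    congr 1; ext j; rw [h2']; ring
  rcases le_or_gt lam 0 with hneg | hpos
  · have hq : 0 ≤ v ⬝ᵥ (M *ᵥ v) := by
      have := hPSD.dotProduct_mulVec_nonneg v
      simpa using this
    have : 0 ≤ ∑ i, v i * v i := Finset.sum_nonneg fun i _ => mul_self_nonneg _
    nlinarith
  · -- positive case
    set j₀ : V := e.symm (σ ⟨0, by omega⟩) with hj₀
    have claim1 : ∀ j : V, j ≠ j₀ → lam ≤ μ j := by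
      intro j hj
      set k := σ.symm (e j) with hk
      have hσk : σ k = e j := σ.apply_symm_apply _
      have hk0 : k ≠ ⟨0, by omega⟩ := by
        intro hcontr
        apply hj
        rw [hcontr] at hσk
        rw [hj₀, hσk, Equiv.symm_apply_apply]
      have hle : (⟨1, h2⟩ : Fin (Fintype.card V)) ≤ k := by
        rw [Fin.le_def]
        have hkv : k.val ≠ 0 := fun hh => hk0 (Fin.ext hh)
        show 1 ≤ k.val
        omega
      have := Tuple.monotone_sort g hle
      simp only [Function.comp_apply, hσk] at this
      have h'' : lam ≤ g (e j) := by rw [← hσk]; exact this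
      simpa [hg] using h''
    -- constant vector
    set u : V → ℝ := fun _ => 1 with hu
    set d : V → ℝ := fun j => (⇑(B j)) ⬝ᵥ u with hd
    have hMu : M *ᵥ u = 0 := G.lapMatrix_mulVec_const_eq_zero
    have hLu : ∑ j, μ j * (d j * d j) = 0 := by
      calc ∑ j, μ j * (d j * d j)
          = ∑ j, ((⇑(B j)) ⬝ᵥ (M *ᵥ u)) * ((⇑(B j)) ⬝ᵥ u) := by
            apply Finset.sum_congr rfl
            intro j _
            rw [hdot]
            ring
        _ = (M *ᵥ u) ⬝ᵥ u := par _ _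
        _ = 0 := by rw [hMu]; simp
    have claim2 : ∀ j : V, j ≠ j₀ → d j = 0 := by
      have hterm : ∀ j ∈ Finset.univ, 0 ≤ μ j * (d j * d j) :=
        fun j _ => mul_nonneg (hnn j) (mul_self_nonneg _)
      have hz := (Finset.sum_eq_zero_iff_of_nonneg hterm).mp hLu
      intro j hj
      have h0 := hz j (Finset.mem_univ j)
      have hμj : 0 < μ j := lt_of_lt_of_le hpos (claim1 j hj)
      rcases mul_eq_zero.mp h0 with h | h
      · exact absurd h (ne_of_gt hμj)
      · exact mul_self_eq_zero.mp h
    have claim3 : d j₀ ≠ 0 := by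
      intro hd0
      have hall : ∀ j, d j = 0 := by
        intro j
        by_cases hj : j = j₀
        · rw [hj]; exact hd0
        · exact claim2 j hj
      have h0 : u ⬝ᵥ u = 0 := by
        rw [← par u u]
        apply Finset.sum_eq_zero
        intro j _
        exact mul_eq_zero_of_left (hall j) _
      have h1 : u ⬝ᵥ u = (Fintype.card V : ℝ) := by simp [hu, dotProduct]
      rw [h1] at h0
      have : (0:ℝ) < (Fintype.card V : ℝ) := by
        have : 0 < Fintype.card V := by omega
        exact_mod_cast this
      linarith
    have claim4 : c j₀ = 0 := by
      have h0 : u ⬝ᵥ v = 0 := by simpa [hu, dotProduct] using hv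
      have h1 : ∑ j, d j * c j = 0 := by
        have hpv := par u v
        rw [h0] at hpv
        exact hpv
      have h2 : ∑ j, d j * c j = d j₀ * c j₀ :=
        Finset.sum_eq_single j₀ (fun j _ hj => by rw [claim2 j hj]; ring) (by simp)
      rw [h2] at h1
      rcases mul_eq_zero.mp h1 with hcase | hcase
      · exact absurd hcase claim3
      · exact hcase
    rw [hLv, ← hsum, Finset.mul_sum]
    apply Finset.sum_le_sum
    intro j _
    by_cases hj : j = j₀
    · rw [hj, claim4]
      simp
    · have := claim1 j hj
      nlinarith [mul_self_nonneg (c j)]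

lemma boundary_bound (s : ℕ) (hs : 1 ≤ s) (X : Set V) (hX : X.Nonempty)
    (hnr : ¬ rReachable G s X) (hcard2 : 2 * X.ncard ≤ Fintype.card V)
    (h2 : 1 < Fintype.card V) :
    lambda2 G ≤ 2 * ((s : ℝ) - 1) := by
  classical
  set n := Fintype.card V with hn
  set k := X.ncard with hk
  have hk1 : 1 ≤ k := by
    have := (Set.ncard_pos (Set.toFinite X)).mpr hX
    omega
  have hkn : k ≤ n := by omega
  set x : V → ℝ := fun i => if i ∈ X then ((n : ℝ) - k) else -(k : ℝ) with hx
  have hfilter1 : (Finset.univ.filter (· ∈ X)).card = k := by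
    rw [hk, Set.ncard_eq_toFinset_card']
    congr 1
    ext i
    simp
  have hfilter2 : (Finset.univ.filter (¬ · ∈ X)).card = n - k := by
    have : (Finset.univ.filter (¬ · ∈ X)) = (Finset.univ.filter (· ∈ X))ᶜ := by
      ext i; simp
    rw [this, Finset.card_compl, hfilter1]
  have hsum0 : ∑ i, x i = 0 := by
    rw [hx]
    rw [Finset.sum_ite, Finset.sum_const, Finset.sum_const, hfilter1, hfilter2,
      nsmul_eq_mul, nsmul_eq_mul, Nat.cast_sub hkn]
    ring
  have hsumsq : ∑ i, x i * x i = (k : ℝ) * ((n : ℝ) - k) * n := by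
    have : ∀ i, x i * x i = if i ∈ X then ((n : ℝ) - k)^2 else (k : ℝ)^2 := by
      intro i
      by_cases h : i ∈ X <;> simp [hx, h] <;> ring
    rw [Finset.sum_congr rfl (fun i _ => this i)]
    rw [Finset.sum_ite, Finset.sum_const, Finset.sum_const, hfilter1, hfilter2,
      nsmul_eq_mul, nsmul_eq_mul, Nat.cast_sub hkn]
    have hkr : (1 : ℝ) ≤ (k : ℝ) := by exact_mod_cast hk1
    ring
  -- the key neighbor-count bound
  have hkey : ∀ i ∈ X, (({j | G.Adj i j} \ X).ncard : ℝ) ≤ (s : ℝ) - 1 := by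
    intro i hi
    have : ¬ (s ≤ ({j | G.Adj i j} \ X).ncard) := by
      intro hcon
      exact hnr ⟨i, hi, hcon⟩
    push_neg at this
    have : ({j | G.Adj i j} \ X).ncard + 1 ≤ s := this
    have := (Nat.cast_le (α := ℝ)).mpr this
    push_cast at this
    linarith
  -- termwise bound on the quadratic form
  have hterm : ∀ i j, (if G.Adj i j then (x i - x j)^2 else 0) ≤
      (if i ∈ X ∧ G.Adj i j ∧ j ∉ X then (n : ℝ)^2 else 0) +
      (if j ∈ X ∧ G.Adj i j ∧ i ∉ X then (n : ℝ)^2 else 0) := by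
    intro i j
    by_cases hij : G.Adj i j
    · by_cases hi : i ∈ X <;> by_cases hj : j ∈ X <;>
        simp only [hx, hij, hi, hj, if_true, if_false, true_and, false_and, and_true,
          and_false, not_true, not_false_iff] <;> ring_nf <;> nlinarith [sq_nonneg ((n:ℝ))]
    · simp only [hij, if_false, false_and, and_false]
      norm_num
  -- sum the first family
  have hinner1 : ∀ i, ∑ j, (if i ∈ X ∧ G.Adj i j ∧ j ∉ X then (n : ℝ)^2 else 0) ≤
      (if i ∈ X then (n : ℝ)^2 * ((s : ℝ) - 1) else 0) := by
    intro i
    by_cases hi : i ∈ X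
    · simp only [hi, true_and, if_true]
      have heq : ∑ j, (if G.Adj i j ∧ j ∉ X then (n : ℝ)^2 else 0)
          = ((Finset.univ.filter (fun j => G.Adj i j ∧ j ∉ X)).card : ℝ) * (n : ℝ)^2 := by
        rw [Finset.sum_ite, Finset.sum_const, Finset.sum_const_zero, add_zero, nsmul_eq_mul]
      have hcardeq : (Finset.univ.filter (fun j => G.Adj i j ∧ j ∉ X)).card
          = ({j | G.Adj i j} \ X).ncard := by
        rw [Set.ncard_eq_toFinset_card']
        congr 1
        ext j
        simp [Set.mem_diff]
      rw [heq, hcardeq]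
      have := hkey i hi
      nlinarith [sq_nonneg ((n:ℝ))]
    · simp [hi]
  have hinner2 : ∀ j, ∑ i, (if j ∈ X ∧ G.Adj i j ∧ i ∉ X then (n : ℝ)^2 else 0) ≤
      (if j ∈ X then (n : ℝ)^2 * ((s : ℝ) - 1) else 0) := by
    intro j
    by_cases hj : j ∈ X
    · simp only [hj, true_and, if_true]
      have heq : ∑ i, (if G.Adj i j ∧ i ∉ X then (n : ℝ)^2 else 0)
          = ((Finset.univ.filter (fun i => G.Adj i j ∧ i ∉ X)).card : ℝ) * (n : ℝ)^2 := by
        rw [Finset.sum_ite, Finset.sum_const, Finset.sum_const_zero, add_zero, nsmul_eq_mul]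
      have hcardeq : (Finset.univ.filter (fun i => G.Adj i j ∧ i ∉ X)).card
          = ({i | G.Adj j i} \ X).ncard := by
        rw [Set.ncard_eq_toFinset_card']
        congr 1
        ext i
        simp [Set.mem_diff, G.adj_comm]
      rw [heq, hcardeq]
      have := hkey j hj
      nlinarith [sq_nonneg ((n:ℝ))]
    · simp [hj]
  have hconst : ∀ (C : ℝ), ∑ i, (if i ∈ X then C else 0) = (k : ℝ) * C := by
    intro C
    rw [Finset.sum_ite, Finset.sum_const, Finset.sum_const_zero, add_zero, hfilter1,
      nsmul_eq_mul]
  -- bound the quadratic form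
  have hQ : x ⬝ᵥ (G.lapMatrix ℝ *ᵥ x) ≤ (k : ℝ) * ((n : ℝ)^2 * ((s : ℝ) - 1)) := by
    have hq1 : x ⬝ᵥ (G.lapMatrix ℝ *ᵥ x)
        = (∑ i, ∑ j, if G.Adj i j then (x i - x j)^2 else 0) / 2 := by
      rw [← Matrix.toLinearMap₂'_apply', SimpleGraph.lapMatrix_toLinearMap₂' ℝ G x]
    rw [hq1]
    have hb : (∑ i, ∑ j, if G.Adj i j then (x i - x j)^2 else 0)
        ≤ ∑ i, ∑ j, ((if i ∈ X ∧ G.Adj i j ∧ j ∉ X then (n : ℝ)^2 else 0) +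
            (if j ∈ X ∧ G.Adj i j ∧ i ∉ X then (n : ℝ)^2 else 0)) := by
      apply Finset.sum_le_sum
      intro i _
      apply Finset.sum_le_sum
      intro j _
      exact hterm i j
    have hsplit : ∑ i, ∑ j, ((if i ∈ X ∧ G.Adj i j ∧ j ∉ X then (n : ℝ)^2 else 0) +
            (if j ∈ X ∧ G.Adj i j ∧ i ∉ X then (n : ℝ)^2 else 0))
        = (∑ i, ∑ j, (if i ∈ X ∧ G.Adj i j ∧ j ∉ X then (n : ℝ)^2 else 0)) +
          (∑ i, ∑ j, (if j ∈ X ∧ G.Adj i j ∧ i ∉ X then (n : ℝ)^2 else 0)) := by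
      rw [← Finset.sum_add_distrib]
      apply Finset.sum_congr rfl
      intro i _
      rw [← Finset.sum_add_distrib]
    have hS1 : (∑ i, ∑ j, (if i ∈ X ∧ G.Adj i j ∧ j ∉ X then (n : ℝ)^2 else 0))
        ≤ (k : ℝ) * ((n : ℝ)^2 * ((s : ℝ) - 1)) := by
      calc (∑ i, ∑ j, (if i ∈ X ∧ G.Adj i j ∧ j ∉ X then (n : ℝ)^2 else 0))
          ≤ ∑ i, (if i ∈ X then (n : ℝ)^2 * ((s : ℝ) - 1) else 0) :=
            Finset.sum_le_sum (fun i _ => hinner1 i)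
        _ = (k : ℝ) * ((n : ℝ)^2 * ((s : ℝ) - 1)) := hconst _
    have hS2 : (∑ i, ∑ j, (if j ∈ X ∧ G.Adj i j ∧ i ∉ X then (n : ℝ)^2 else 0))
        ≤ (k : ℝ) * ((n : ℝ)^2 * ((s : ℝ) - 1)) := by
      rw [Finset.sum_comm]
      calc (∑ j, ∑ i, (if j ∈ X ∧ G.Adj i j ∧ i ∉ X then (n : ℝ)^2 else 0))
          ≤ ∑ j, (if j ∈ X then (n : ℝ)^2 * ((s : ℝ) - 1) else 0) :=
            Finset.sum_le_sum (fun j _ => hinner2 j)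
        _ = (k : ℝ) * ((n : ℝ)^2 * ((s : ℝ) - 1)) := hconst _
    linarith
  -- apply the Rayleigh bound
  have hray := rayleigh_aux G h2 x hsum0
  rw [hsumsq] at hray
  have hfin : lambda2 G * ((k : ℝ) * ((n : ℝ) - k) * n) ≤ (k : ℝ) * ((n : ℝ)^2 * ((s : ℝ) - 1)) :=
    le_trans hray hQ
  have hkr : (1 : ℝ) ≤ (k : ℝ) := by exact_mod_cast hk1
  have h2k : 2 * (k : ℝ) ≤ (n : ℝ) := by exact_mod_cast hcard2
  have hsr : (1 : ℝ) ≤ (s : ℝ) := by exact_mod_cast hs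
  have hp1 : (0:ℝ) < (k:ℝ) * ((n:ℝ) - k) * (n:ℝ) :=
    mul_pos (mul_pos (by linarith) (by linarith)) (by linarith)
  have hp2 : (0:ℝ) ≤ ((s:ℝ) - 1) * ((k:ℝ) * (n:ℝ) * ((n:ℝ) - 2*k)) :=
    mul_nonneg (by linarith) (mul_nonneg (mul_nonneg (by linarith) (by linarith)) (by linarith))
  by_contra hcon
  push_neg at hcon
  nlinarith [hfin, hp2, mul_lt_mul_of_pos_right hcon hp1]

end AuxRobust

/-- If the second smallest Laplacian eigenvalue exceeds r - 1 for a positive integer r,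
then the graph is at least ⌊r/2⌋-robust. -/
theorem lambda2_gt_imp_robust {V : Type*} [Fintype V] [DecidableEq V]
    (G : SimpleGraph V) [DecidableRel G.Adj] (r : ℕ) (hr : 0 < r)
    (h : (r : ℝ) - 1 < lambda2 G) : rRobust G (r / 2) := by
  intro X₁ X₂ hX₁ hX₂ hdisj
  by_contra hcon
  push_neg at hcon
  obtain ⟨hr1, hr2⟩ := hcon
  rcases Nat.eq_zero_or_pos (r / 2) with hs | hs
  · exact hr1 ⟨hX₁.choose, hX₁.choose_spec, by omega⟩
  have hadd : X₁.ncard + X₂.ncard ≤ Fintype.card V := by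
    rw [← Set.ncard_union_eq hdisj (Set.toFinite _) (Set.toFinite _)]
    have := Set.ncard_le_ncard (Set.subset_univ (X₁ ∪ X₂)) (Set.toFinite _)
    simpa [Set.ncard_univ] using this
  have hk1 : 1 ≤ X₁.ncard := (Set.ncard_pos (Set.toFinite X₁)).mpr hX₁
  have hk2 : 1 ≤ X₂.ncard := (Set.ncard_pos (Set.toFinite X₂)).mpr hX₂
  have h2 : 1 < Fintype.card V := by omega
  have h2s : 2 * (r / 2) ≤ r := by omega
  have hcast : 2 * ((r / 2 : ℕ) : ℝ) ≤ (r : ℝ) := by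
    have : ((2 * (r / 2) : ℕ) : ℝ) ≤ ((r : ℕ) : ℝ) := Nat.cast_le.mpr h2s
    push_cast at this
    linarith
  have hend : lambda2 G ≤ 2 * (((r / 2 : ℕ) : ℝ) - 1) := by
    rcases le_total X₁.ncard X₂.ncard with hle | hle
    · exact boundary_bound G (r / 2) hs X₁ hX₁ hr1 (by omega) h2
    · exact boundary_bound G (r / 2) hs X₂ hX₂ hr2 (by omega) h2
  linarith
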